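/- Let C_1, …, C_T be i.i.d. random variables with n·C_l distributed as chi-squared with n degrees of freedom, and let P_T = ∏_{l=1}^T C_l. Then for every n ≥ 2, T ≥ 1 and every ε > exp(−T/(3n)), one has P(P_T ≤ ε) ≥ 1 − 6 / ( n·T·( (log ε)/T + 1/(3n) )² ). -/

import Mathlib

open MeasureTheory ProbabilityTheory Filter

open scoped ENNReal NNReal

lemma log_ge_quad {u : ℝ} (hu : 0 ≤ u) : u - u^2/2 ≤ Real.log (1+u) := by
  have key : MonotoneOn (fun w : ℝ => Real.log (1+w) - (w - w^2/2)) (Set.Ici 0) := by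
    have hder : ∀ w : ℝ, 0 ≤ w →
        HasDerivAt (fun w : ℝ => Real.log (1+w) - (w - w^2/2)) (1/(1+w) - (1 - w)) w := by
      intro w hw
      have h1 : HasDerivAt (fun w : ℝ => 1+w) 1 w := (hasDerivAt_id w).const_add 1
      have h2 : HasDerivAt (fun w : ℝ => Real.log (1+w)) (1/(1+w)) w := by
        simpa using h1.log (by positivity)
      have h3 : HasDerivAt (fun w : ℝ => w - w^2/2) (1 - w) w := by
        have := ((hasDerivAt_id w).sub ((hasDerivAt_pow 2 w).div_const 2))
        exact (by simpa using this : HasDerivAt (id - fun x : ℝ => x^2/2) (1 - w) w)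
      exact h2.sub h3
    apply monotoneOn_of_deriv_nonneg (convex_Ici 0)
    · exact fun w hw => ((hder w hw).continuousAt).continuousWithinAt
    · intro w hw
      rw [interior_Ici] at hw
      exact ((hder w hw.le).differentiableAt).differentiableWithinAt
    · intro w hw
      rw [interior_Ici] at hw
      rw [(hder w hw.le).deriv]
      have h1 : (0:ℝ) < 1 + w := by linarith [(Set.mem_Ioi.mp hw).le]
      have : (1:ℝ) - w ≤ 1/(1+w) := by
        rw [le_div_iff₀ h1]; nlinarith [sq_nonneg w]
      linarith
  have h0 := key (Set.self_mem_Ici) (Set.mem_Ici.2 hu) hu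
  simp only [Real.log_one] at h0
  simp at h0 ⊢
  nlinarith [h0]

lemma log_le_cubic {u : ℝ} (hu : 0 ≤ u) : Real.log (1+u) ≤ u - u^2/2 + u^3/3 := by
  have key : MonotoneOn (fun w : ℝ => (w - w^2/2 + w^3/3) - Real.log (1+w)) (Set.Ici 0) := by
    have hder : ∀ w : ℝ, 0 ≤ w →
        HasDerivAt (fun w : ℝ => (w - w^2/2 + w^3/3) - Real.log (1+w))
          ((1 - w + w^2) - 1/(1+w)) w := by
      intro w hw
      have h1 : HasDerivAt (fun w : ℝ => 1+w) 1 w := (hasDerivAt_id w).const_add 1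
      have h2 : HasDerivAt (fun w : ℝ => Real.log (1+w)) (1/(1+w)) w := by
        simpa using h1.log (by positivity)
      have h3 : HasDerivAt (fun w : ℝ => w - w^2/2 + w^3/3) (1 - w + w^2) w := by
        have := (((hasDerivAt_id w).sub ((hasDerivAt_pow 2 w).div_const 2)).add
          ((hasDerivAt_pow 3 w).div_const 3))
        convert this using 1
        · rfl
        · rfl
        · funext x; simp only [Pi.add_apply, Pi.sub_apply, id]
        · push_cast; ring
      exact h3.sub h2
    apply monotoneOn_of_deriv_nonneg (convex_Ici 0)
    · exact fun w hw => ((hder w hw).continuousAt).continuousWithinAt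
    · intro w hw
      rw [interior_Ici] at hw
      exact ((hder w hw.le).differentiableAt).differentiableWithinAt
    · intro w hw
      rw [interior_Ici] at hw
      rw [(hder w hw.le).deriv]
      have h1 : (0:ℝ) < 1 + w := by linarith [(Set.mem_Ioi.mp hw).le]
      have : 1/(1+w) ≤ (1:ℝ) - w + w^2 := by
        rw [div_le_iff₀ h1]; nlinarith [(Set.mem_Ioi.mp hw).le, sq_nonneg w]
      linarith
  have h0 := key (Set.self_mem_Ici) (Set.mem_Ici.2 hu) hu
  simp only [Real.log_one] at h0
  simp at h0 ⊢
  nlinarith [h0]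

section sums
variable {a : ℝ}

lemma sum_sq_upper (ha : 1 ≤ a) (N : ℕ) :
    ∑ j ∈ Finset.range N, 1/(a+j)^2 ≤ 1/(a-1/2) - 1/(a+N-1/2) := by
  induction N with
  | zero => simp
  | succ N ih =>
    rw [Finset.sum_range_succ]
    have hx : (1:ℝ) ≤ a + N := by
      have : (0:ℝ) ≤ N := Nat.cast_nonneg N
      linarith
    have h1 : (0:ℝ) < a + N - 1/2 := by linarith
    have h2 : (0:ℝ) < a + N + 1/2 := by linarith
    have h3 : (0:ℝ) < a + N := by linarith
    have key : 1/(a+N)^2 ≤ 1/(a+N-1/2) - 1/(a+N+1/2) := by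
      rw [div_sub_div _ _ h1.ne' h2.ne']
      have hnum : 1*(a+↑N+1/2) - (a+↑N-1/2)*1 = 1 := by ring
      rw [hnum]
      apply one_div_le_one_div_of_le
      · nlinarith
      · nlinarith
    have hcast : (↑(N+1) : ℝ) = (N:ℝ) + 1 := by push_cast; ring
    rw [hcast]
    have : 1/(a+((N:ℝ)+1)-1/2) = 1/(a+N+1/2) := by norm_num; ring_nf
    rw [this]
    linarith

lemma sum_sq_upper' (ha : 1 ≤ a) (N : ℕ) :
    ∑ j ∈ Finset.range N, 1/(a+j)^2 ≤ 2/a := by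
  have h := sum_sq_upper ha N
  have h1 : (0:ℝ) < a - 1/2 := by linarith
  have h2 : (0:ℝ) < a + N - 1/2 := by
    have : (0:ℝ) ≤ N := Nat.cast_nonneg N
    linarith
  have h3 : 1/(a-1/2) ≤ 2/a := by
    rw [div_le_div_iff₀ h1 (by linarith)]
    linarith
  have h4 : 0 < 1/(a+N-1/2) := by positivity
  linarith

lemma sum_sq_lower (ha : 1 ≤ a) (N : ℕ) :
    1/a - 1/(a+N) ≤ ∑ j ∈ Finset.range N, 1/(a+j)^2 := by
  induction N with
  | zero => simp
  | succ N ih =>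
    rw [Finset.sum_range_succ]
    have hx : (1:ℝ) ≤ a + N := by
      have : (0:ℝ) ≤ N := Nat.cast_nonneg N
      linarith
    have h3 : (0:ℝ) < a + N := by linarith
    have h4 : (0:ℝ) < a + N + 1 := by linarith
    have key : 1/(a+N) - 1/(a+N+1) ≤ 1/(a+N)^2 := by
      rw [div_sub_div _ _ h3.ne' h4.ne']
      have hnum : 1*(a+↑N+1) - (a+↑N)*1 = 1 := by ring
      rw [hnum]
      apply one_div_le_one_div_of_le
      · positivity
      · nlinarith
    have hcast : (↑(N+1) : ℝ) = (N:ℝ) + 1 := by push_cast; ring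
    rw [hcast, ← add_assoc]
    linarith

lemma log_telescope (a : ℝ) (N : ℕ) :
    ∑ j ∈ Finset.range N, (Real.log (a+j+1) - Real.log (a+j))
      = Real.log (a+N) - Real.log a := by
  have := Finset.sum_range_sub (fun j : ℕ => Real.log (a+j)) N
  simp only [Nat.cast_add, Nat.cast_one] at this
  convert this using 2 with j
  · ring_nf
  · simp

end sums

lemma term_bound {a s x : ℝ} (ha : 1 ≤ a) (hs : 0 ≤ s) (hx : a ≤ x) :
    s*(Real.log (x+1) - Real.log x) + (Real.log x - Real.log (x+s))
      ≤ ((1/(3*a) - 1/2)*s + s^2/2) * (1/x^2) := by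
  have hx0 : (0:ℝ) < x := by linarith
  have e1 : Real.log (x+1) - Real.log x = Real.log (1 + 1/x) := by
    rw [← Real.log_div (by positivity) hx0.ne']
    congr 1
    field_simp
  have e2 : Real.log (x+s) - Real.log x = Real.log (1 + s/x) := by
    rw [← Real.log_div (by positivity) hx0.ne']
    congr 1
    field_simp
  have hu1 : (0:ℝ) ≤ 1/x := by positivity
  have hu2 : (0:ℝ) ≤ s/x := by positivity
  have b1 : Real.log (1 + 1/x) ≤ 1/x - (1/x)^2/2 + (1/x)^3/3 := log_le_cubic hu1
  have b2 : s/x - (s/x)^2/2 ≤ Real.log (1 + s/x) := log_ge_quad hu2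
  have e3 : Real.log x - Real.log (x+s) = -(Real.log (1 + s/x)) := by
    rw [← e2]; ring
  rw [e1, e3]
  have hcube : 1/x^3 ≤ (1/a) * (1/x^2) := by
    rw [div_mul_div_comm, one_mul]
    apply one_div_le_one_div_of_le (by positivity)
    nlinarith
  have hdiv1 : (1/x)^2 = 1/x^2 := by ring
  have hdiv2 : (1/x)^3 = 1/x^3 := by ring
  have hdiv3 : (s/x)^2 = s^2 * (1/x^2) := by ring
  have c1 : s * Real.log (1 + 1/x) ≤ s*(1/x) - s*(1/x^2)/2 + s*(1/x^3)/3 := by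
    have := mul_le_mul_of_nonneg_left b1 hs
    rw [hdiv1, hdiv2] at this
    linarith
  have c2 : -Real.log (1 + s/x) ≤ -(s/x) + s^2*(1/x^2)/2 := by
    rw [hdiv3] at b2
    linarith
  have c3 : s*(1/x^3)/3 ≤ (1/(3*a))*s*(1/x^2) := by
    have := mul_le_mul_of_nonneg_left hcube (by positivity : (0:ℝ) ≤ s/3)
    ring_nf at this ⊢
    linarith
  have hsx : s/x = s*(1/x) := by ring
  rw [hsx] at c2
  linarith [c1, c2, c3]

lemma key_sum {a s : ℝ} (ha : 1 ≤ a) (hs : 0 ≤ s) (N : ℕ) :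
    s * Real.log N + ∑ j ∈ Finset.range (N+1), Real.log ((a+j)/(a+s+j))
      ≤ s * Real.log a + (-(s/(6*a)) + s^2/a + s/(2*(a+N))) := by
  have ha0 : (0:ℝ) < a := by linarith
  have hxj : ∀ j : ℕ, (0:ℝ) < a + j := by
    intro j; have : (0:ℝ) ≤ j := Nat.cast_nonneg j; linarith
  have hxsj : ∀ j : ℕ, (0:ℝ) < a + s + j := by
    intro j; have : (0:ℝ) ≤ j := Nat.cast_nonneg j; linarith
  have haN : (0:ℝ) < a + N := hxj N
  -- log N ≤ log (a + N)
  have hlogN : s * Real.log N ≤ s * Real.log (a + N) := by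
    rcases Nat.eq_zero_or_pos N with h0 | h0
    · subst h0
      simp only [Nat.cast_zero, Real.log_zero, mul_zero, add_zero]
      have := Real.log_nonneg (by linarith : (1:ℝ) ≤ a)
      nlinarith
    · have h1 : (1:ℝ) ≤ N := by exact_mod_cast h0
      have := Real.log_le_log (by linarith) (by linarith : (N:ℝ) ≤ a + N)
      nlinarith
  -- split off the last term of the product sum
  rw [Finset.sum_range_succ]
  have hlast : Real.log ((a+N)/(a+s+N)) ≤ 0 := by
    apply Real.log_nonpos
    · positivity
    · rw [div_le_one (hxsj N)]; linarith
  -- rewrite each term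
  have hterm : ∀ j ∈ Finset.range N, Real.log ((a+j)/(a+s+j))
      = Real.log (a+j) - Real.log (a+s+j) := by
    intro j _
    rw [Real.log_div (hxj j).ne' (hxsj j).ne']
  rw [Finset.sum_congr rfl hterm]
  -- telescoping for log (a+N)
  have htel := log_telescope a N
  -- per-term bound
  have hsum : ∑ j ∈ Finset.range N, (s * (Real.log (a+j+1) - Real.log (a+j))
        + (Real.log (a+j) - Real.log (a+s+j)))
      ≤ ((1/(3*a) - 1/2)*s) * (∑ j ∈ Finset.range N, 1/(a+j)^2)
        + (s^2/2) * (∑ j ∈ Finset.range N, 1/(a+j)^2) := by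
    rw [Finset.mul_sum, Finset.mul_sum, ← Finset.sum_add_distrib]
    apply Finset.sum_le_sum
    intro j _
    have hb := term_bound ha hs (by linarith [ (Nat.cast_nonneg j : (0:ℝ) ≤ j) ] : a ≤ a + j)
    have e1 : a + (j:ℝ) + s = a + s + j := by ring
    rw [e1] at hb
    linarith [hb]
  -- bound the two sums
  have hS1 : ((1/(3*a) - 1/2)*s) * (∑ j ∈ Finset.range N, 1/(a+j)^2)
      ≤ ((1/(3*a) - 1/2)*s) * (1/a - 1/(a+N)) := by
    apply mul_le_mul_of_nonpos_left (sum_sq_lower ha N)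
    have h1 : 1/(3*a) ≤ 1/3 := by
      apply div_le_div_of_nonneg_left <;> linarith
    nlinarith
  have hS2 : (s^2/2) * (∑ j ∈ Finset.range N, 1/(a+j)^2) ≤ (s^2/2) * (2/a) := by
    apply mul_le_mul_of_nonneg_left (sum_sq_upper' ha N) (by positivity)
  -- final arithmetic
  have hfin : ((1/(3*a) - 1/2)*s) * (1/a - 1/(a+N)) + (s^2/2) * (2/a)
      ≤ -(s/(6*a)) + s^2/a + s/(2*(a+N)) := by
    have h1 : 1/(3*a) ≤ 1/3 := by
      apply div_le_div_of_nonneg_left <;> linarith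
    have h2 : (0:ℝ) < 1/a := by positivity
    have h3 : (0:ℝ) < 1/(a+N) := by positivity
    have e1 : (s^2/2) * (2/a) = s^2/a := by ring
    rw [e1]
    have c1 : ((1/(3*a) - 1/2)*s) * (1/a) ≤ -(s/(6*a)) := by
      have : -(s/(6*a)) = (-(1/6)*s) * (1/a) := by ring
      rw [this]
      apply mul_le_mul_of_nonneg_right _ h2.le
      nlinarith
    have c2 : ((1/(3*a) - 1/2)*s) * (-(1/(a+N))) ≤ s/(2*(a+N)) := by
      have e2 : s/(2*(a+N)) = ((1/2)*s) * (1/(a+N)) := by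
        field_simp
      rw [e2]
      have e3 : ((1/(3*a) - 1/2)*s) * (-(1/(a+N))) = ((1/2 - 1/(3*a))*s) * (1/(a+N)) := by ring
      rw [e3]
      apply mul_le_mul_of_nonneg_right _ h3.le
      nlinarith [mul_nonneg (by positivity : (0:ℝ) ≤ 1/(3*a)) hs]
    nlinarith [c1, c2]
  -- assemble
  have expand : ∑ j ∈ Finset.range N, (s * (Real.log (a+j+1) - Real.log (a+j))
        + (Real.log (a+j) - Real.log (a+s+j)))
      = s * (Real.log (a+N) - Real.log a)
        + ∑ j ∈ Finset.range N, (Real.log (a+j) - Real.log (a+s+j)) := by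
    rw [Finset.sum_add_distrib, ← Finset.mul_sum, htel]
  rw [expand] at hsum
  nlinarith [hsum, hlogN, hlast, hS1, hS2, hfin]

lemma gammaSeq_ratio_le {a s : ℝ} (ha : 1 ≤ a) (hs : 0 ≤ s) {N : ℕ} (hN : 1 ≤ N) :
    Real.GammaSeq (a+s) N / Real.GammaSeq a N
      ≤ a ^ s * Real.exp (-(s/(6*a)) + s^2/a + s/(2*(a+N))) := by
  have ha0 : (0:ℝ) < a := by linarith
  have hN0 : (0:ℝ) < N := by exact_mod_cast hN
  have hxj : ∀ j : ℕ, (0:ℝ) < a + j := fun j => by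
    have : (0:ℝ) ≤ j := Nat.cast_nonneg j; linarith
  have hxsj : ∀ j : ℕ, (0:ℝ) < a + s + j := fun j => by
    have : (0:ℝ) ≤ j := Nat.cast_nonneg j; linarith
  have hP2 : (0:ℝ) < ∏ j ∈ Finset.range (N+1), (a + j) :=
    Finset.prod_pos fun j _ => hxj j
  have hP1 : (0:ℝ) < ∏ j ∈ Finset.range (N+1), (a + s + j) :=
    Finset.prod_pos fun j _ => hxsj j
  have hfac : (0:ℝ) < ((Nat.factorial N : ℕ) : ℝ) := by exact_mod_cast Nat.factorial_pos N
  have hNa : (0:ℝ) < (N:ℝ) ^ a := Real.rpow_pos_of_pos hN0 a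
  have hNs : (0:ℝ) < (N:ℝ) ^ s := Real.rpow_pos_of_pos hN0 s
  have hratio : Real.GammaSeq (a+s) N / Real.GammaSeq a N
      = (N:ℝ) ^ s * ∏ j ∈ Finset.range (N+1), ((a+j)/(a+s+j)) := by
    rw [Real.GammaSeq, Real.GammaSeq, Finset.prod_div_distrib, Real.rpow_add hN0]
    field_simp
  rw [hratio]
  -- take logs
  have hprodpos : (0:ℝ) < ∏ j ∈ Finset.range (N+1), ((a+j)/(a+s+j)) :=
    Finset.prod_pos fun j _ => div_pos (hxj j) (hxsj j)
  have hLHSpos : (0:ℝ) < (N:ℝ) ^ s * ∏ j ∈ Finset.range (N+1), ((a+j)/(a+s+j)) :=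
    mul_pos hNs hprodpos
  have hlog : Real.log ((N:ℝ) ^ s * ∏ j ∈ Finset.range (N+1), ((a+j)/(a+s+j)))
      ≤ s * Real.log a + (-(s/(6*a)) + s^2/a + s/(2*(a+N))) := by
    rw [Real.log_mul hNs.ne' hprodpos.ne', Real.log_rpow hN0,
      Real.log_prod (fun j _ => (div_pos (hxj j) (hxsj j)).ne')]
    exact key_sum ha hs N
  calc (N:ℝ) ^ s * ∏ j ∈ Finset.range (N+1), ((a+j)/(a+s+j))
      = Real.exp (Real.log ((N:ℝ) ^ s * ∏ j ∈ Finset.range (N+1), ((a+j)/(a+s+j)))) :=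
        (Real.exp_log hLHSpos).symm
    _ ≤ Real.exp (s * Real.log a + (-(s/(6*a)) + s^2/a + s/(2*(a+N)))) :=
        Real.exp_le_exp.2 hlog
    _ = a ^ s * Real.exp (-(s/(6*a)) + s^2/a + s/(2*(a+N))) := by
        rw [Real.exp_add, Real.rpow_def_of_pos ha0, mul_comm (Real.log a) s]

lemma Gamma_ratio_le {a s : ℝ} (ha : 1 ≤ a) (hs : 0 ≤ s) :
    Real.Gamma (a+s) ≤ Real.Gamma a * (a ^ s * Real.exp (-(s/(6*a)) + s^2/a)) := by
  have ha0 : (0:ℝ) < a := by linarith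
  have hGa : (0:ℝ) < Real.Gamma a := Real.Gamma_pos_of_pos ha0
  have htendsto : Tendsto (fun N : ℕ => Real.GammaSeq (a+s) N / Real.GammaSeq a N)
      atTop (nhds (Real.Gamma (a+s) / Real.Gamma a)) :=
    (Real.GammaSeq_tendsto_Gamma (a+s)).div (Real.GammaSeq_tendsto_Gamma a) hGa.ne'
  have hU : Tendsto (fun N : ℕ => a ^ s * Real.exp (-(s/(6*a)) + s^2/a + s/(2*(a+N))))
      atTop (nhds (a ^ s * Real.exp (-(s/(6*a)) + s^2/a + 0))) := by
    apply Tendsto.const_mul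
    apply Real.continuous_exp.continuousAt.tendsto.comp
    apply Tendsto.const_add
    apply Tendsto.div_atTop tendsto_const_nhds
    apply Tendsto.const_mul_atTop (by norm_num : (0:ℝ) < 2)
    exact tendsto_atTop_add_const_left _ a tendsto_natCast_atTop_atTop
  have hle : Real.Gamma (a+s) / Real.Gamma a ≤ a ^ s * Real.exp (-(s/(6*a)) + s^2/a + 0) := by
    apply le_of_tendsto_of_tendsto htendsto hU
    filter_upwards [eventually_ge_atTop 1] with N hN
    exact gammaSeq_ratio_le ha hs hN
  rw [add_zero] at hle
  rw [div_le_iff₀ hGa] at hle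
  linarith [hle]

lemma moment_eq {Ω : Type} [MeasurableSpace Ω] (μ : Measure Ω) {a b s : ℝ}
    (ha : 0 < a) (hb : 0 < b) (hs : 0 ≤ s)
    (X : Ω → ℝ) (hX : Measurable X)
    (hlaw : Measure.map (fun ω => b * X ω) μ = gammaMeasure a (1/2)) :
    ∫⁻ ω, ENNReal.ofReal (|X ω| ^ s) ∂μ
      = ENNReal.ofReal ((1/b)^s * ((2:ℝ)^s * (Real.Gamma (a+s)/Real.Gamma a))) := by
  have has : 0 < a + s := by linarith
  have hΓa : (0:ℝ) < Real.Gamma a := Real.Gamma_pos_of_pos ha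
  have hΓas : (0:ℝ) < Real.Gamma (a+s) := Real.Gamma_pos_of_pos has
  have hφ : Measurable fun x : ℝ => ENNReal.ofReal (|x| ^ s) :=
    ((Real.continuous_rpow_const hs).comp continuous_abs).measurable.ennreal_ofReal
  have hbX : Measurable fun ω => b * X ω := measurable_const.mul hX
  have hpt : ∀ ω, ENNReal.ofReal (|X ω| ^ s)
      = ENNReal.ofReal ((1/b)^s) * ENNReal.ofReal (|b * X ω| ^ s) := by
    intro ω
    rw [← ENNReal.ofReal_mul (by positivity)]
    congr 1
    rw [abs_mul, abs_of_pos hb, ← Real.mul_rpow (by positivity) (by positivity)]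
    congr 1
    field_simp
  simp_rw [hpt]
  have hm2 : Measurable fun ω => ENNReal.ofReal (|b * X ω| ^ s) := hφ.comp hbX
  rw [lintegral_const_mul _ hm2]
  have hmap : ∫⁻ ω, ENNReal.ofReal (|b * X ω| ^ s) ∂μ
      = ∫⁻ x, ENNReal.ofReal (|x| ^ s) ∂(gammaMeasure a (1/2)) := by
    rw [← hlaw, lintegral_map hφ hbX]
  rw [hmap]
  have hpdfmeas : Measurable (gammaPDF a (1/2)) :=
    (measurable_gammaPDFReal a (1/2)).ennreal_ofReal
  have hpdf2meas : Measurable (gammaPDF (a+s) (1/2)) :=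
    (measurable_gammaPDFReal (a+s) (1/2)).ennreal_ofReal
  rw [gammaMeasure, lintegral_withDensity_eq_lintegral_mul _ hpdfmeas hφ]
  set c : ℝ := (2:ℝ)^s * (Real.Gamma (a+s)/Real.Gamma a) with hc
  have hcpos : 0 < c := by positivity
  have hae : (fun x => (gammaPDF a (1/2) * fun x => ENNReal.ofReal (|x| ^ s)) x)
      =ᵐ[volume] (fun x => ENNReal.ofReal c * gammaPDF (a+s) (1/2) x) := by
    have h0 : ∀ᵐ x : ℝ, x ≠ 0 := by
      rw [ae_iff]
      convert Real.volume_singleton (a := (0:ℝ)) using 2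
      ext x; simp
    filter_upwards [h0] with x hx
    simp only [Pi.mul_apply]
    rcases lt_or_gt_of_ne hx with hneg | hpos
    · rw [gammaPDF_of_neg hneg, gammaPDF_of_neg hneg]
      simp
    · rw [gammaPDF_of_nonneg hpos.le, gammaPDF_of_nonneg hpos.le, abs_of_pos hpos,
        ← ENNReal.ofReal_mul (by positivity), ← ENNReal.ofReal_mul hcpos.le]
      congr 1
      have hx1 : x^(a+s-1) = x^(a-1) * x^s := by
        rw [← Real.rpow_add hpos]; ring_nf
      have h2 : ((1/2):ℝ)^(a+s) = (1/2)^a * (1/2)^s := Real.rpow_add (by norm_num) _ _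
      have h4 : ((1/2):ℝ)^s = 1/2^s := by
        rw [Real.div_rpow (by norm_num) (by norm_num : (0:ℝ) ≤ 2), Real.one_rpow]
      have h5 : (0:ℝ) < (2:ℝ)^s := Real.rpow_pos_of_pos (by norm_num) s
      rw [hc, hx1, h2, h4]
      field_simp
  rw [lintegral_congr_ae hae, lintegral_const_mul _ hpdf2meas,
    lintegral_gammaPDF_eq_one has (by norm_num : (0:ℝ) < 1/2), mul_one,
    ← ENNReal.ofReal_mul (by positivity)]

lemma lintegral_indep_prod {Ω : Type} [MeasurableSpace Ω] (μ : Measure Ω) [IsProbabilityMeasure μ]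
    {T : ℕ} (g : Fin T → Ω → ℝ≥0∞) (hg : ∀ l, Measurable (g l))
    (hind : iIndepFun g μ) (S : Finset (Fin T)) :
    ∫⁻ ω, ∏ l ∈ S, g l ω ∂μ = ∏ l ∈ S, ∫⁻ ω, g l ω ∂μ := by
  classical
  induction S using Finset.induction_on with
  | empty => simp
  | @insert i S hi ih =>
    have hprod : Measurable fun ω => ∏ l ∈ S, g l ω :=
      Finset.measurable_prod _ fun l _ => hg l
    have hIndep : IndepFun (fun ω => ∏ l ∈ S, g l ω) (g i) μ := by
      have := iIndepFun.indepFun_finset_prod_of_notMem hind hg hi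
      have he : (∏ j ∈ S, g j) = fun ω => ∏ l ∈ S, g l ω := by
        ext ω; simp
      rwa [he] at this
    simp_rw [Finset.prod_insert hi]
    rw [← ih]
    have hmul := lintegral_mul_eq_lintegral_mul_lintegral_of_indepFun hprod (hg i) hIndep
    have : ∫⁻ ω, g i ω * ∏ l ∈ S, g l ω ∂μ
        = ∫⁻ ω, ((fun ω => ∏ l ∈ S, g l ω) * g i) ω ∂μ := by
      apply lintegral_congr
      intro ω
      simp [mul_comm]
    rw [this, hmul, mul_comm]

/-- The chi-squared distribution with `k` degrees of freedom, as the Gamma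
distribution with shape `k/2` and rate `1/2`. -/
noncomputable def chiSquared (k : ℝ) : Measure ℝ := gammaMeasure (k / 2) (1 / 2)

/-- If `C_1, …, C_T` are i.i.d. with `n · C_l ~ χ²(n)` and
`P_T = ∏_{l=1}^T C_l`, then for every `n ≥ 2`, `T ≥ 1` and every `ε > exp(−T/(3n))`,
`P(P_T ≤ ε) ≥ 1 − 6 / (n T ((log ε)/T + 1/(3n))²)`. -/
theorem stmt_2
    {Ω : Type} [MeasurableSpace Ω] (μ : Measure Ω) [IsProbabilityMeasure μ]
    (n T : ℕ) (hn : 2 ≤ n) (hT : 1 ≤ T)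
    (C : Fin T → Ω → ℝ) (hmeas : ∀ l, Measurable (C l))
    (hindep : iIndepFun C μ)
    (hlaw : ∀ l, Measure.map (fun ω => (n : ℝ) * C l ω) μ = chiSquared n)
    (ε : ℝ) (hε : Real.exp (-(T : ℝ) / (3 * n)) < ε) :
    1 - 6 / ((n : ℝ) * T * (Real.log ε / T + 1 / (3 * n)) ^ 2)
      ≤ (μ {ω | ∏ l, C l ω ≤ ε}).toReal := by
  have hn0 : (0:ℝ) < n := by
    have : (2:ℝ) ≤ n := by exact_mod_cast hn
    linarith
  have hn2 : (2:ℝ) ≤ n := by exact_mod_cast hn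
  have hT0 : (0:ℝ) < T := by
    have : (1:ℝ) ≤ T := by exact_mod_cast hT
    linarith
  have hε0 : 0 < ε := lt_trans (Real.exp_pos _) hε
  have hlogε : -(T:ℝ)/(3*n) < Real.log ε := by
    have := Real.log_lt_log (Real.exp_pos _) hε
    rwa [Real.log_exp] at this
  set δ : ℝ := Real.log ε / T + 1 / (3 * n) with hδdef
  have hδ : 0 < δ := by
    have h2 : (0:ℝ) < 3*(n:ℝ) := by positivity
    have h3 : -(T:ℝ) < Real.log ε * (3*n) := by
      have := mul_lt_mul_of_pos_right hlogε h2
      have he : (-(T:ℝ)/(3*n))*(3*n) = -(T:ℝ) := by field_simp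
      rwa [he] at this
    rw [hδdef, div_add_div _ _ (ne_of_gt hT0) (ne_of_gt h2)]
    apply div_pos
    · nlinarith
    · positivity
  set a : ℝ := (n:ℝ)/2 with hadef
  have ha1 : 1 ≤ a := by rw [hadef]; linarith
  set s : ℝ := n*δ/4 with hsdef
  have hs0 : 0 < s := by rw [hsdef]; positivity
  set y : ℝ := (n:ℝ) * T * δ^2 with hydef
  have hy0 : 0 < y := by rw [hydef]; positivity
  clear_value δ a s y
  -- transformed functions
  have hφm : Measurable fun x : ℝ => ENNReal.ofReal (|x| ^ s) :=
    ((Real.continuous_rpow_const hs0.le).comp continuous_abs).measurable.ennreal_ofReal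
  set g : Fin T → Ω → ℝ≥0∞ := fun l ω => ENNReal.ofReal (|C l ω| ^ s) with hgdef
  have hgm : ∀ l, Measurable (g l) := fun l => hφm.comp (hmeas l)
  have hgind : iIndepFun g μ :=
    hindep.comp (fun _ x => ENNReal.ofReal (|x| ^ s)) (fun _ => hφm)
  set B : ℝ := -(s/(3*n)) + 2*s^2/n with hBdef
  clear_value B
  -- moment bound for each factor
  have hmom : ∀ l, ∫⁻ ω, g l ω ∂μ ≤ ENNReal.ofReal (Real.exp B) := by
    intro l
    have hlaw' : Measure.map (fun ω => (n:ℝ) * C l ω) μ = gammaMeasure a (1/2) := by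
      rw [hlaw l, chiSquared, hadef]
    have heq := moment_eq μ (by linarith : (0:ℝ) < a) hn0 hs0.le (C l) (hmeas l) hlaw'
    rw [hgdef]
    rw [heq]
    apply ENNReal.ofReal_le_ofReal
    have hrat := Gamma_ratio_le ha1 hs0.le
    have hΓa : (0:ℝ) < Real.Gamma a := Real.Gamma_pos_of_pos (by linarith)
    have hdiv : Real.Gamma (a+s)/Real.Gamma a
        ≤ a ^ s * Real.exp (-(s/(6*a)) + s^2/a) := by
      rw [div_le_iff₀ hΓa]
      linarith [hrat]
    have hcoef : (0:ℝ) ≤ (1/(n:ℝ))^s * (2:ℝ)^s := by positivity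
    calc (1/(n:ℝ))^s * ((2:ℝ)^s * (Real.Gamma (a+s)/Real.Gamma a))
        = ((1/(n:ℝ))^s * (2:ℝ)^s) * (Real.Gamma (a+s)/Real.Gamma a) := by ring
      _ ≤ ((1/(n:ℝ))^s * (2:ℝ)^s) * (a ^ s * Real.exp (-(s/(6*a)) + s^2/a)) :=
          mul_le_mul_of_nonneg_left hdiv hcoef
      _ = ((1/(n:ℝ)) * 2 * a)^s * Real.exp (-(s/(6*a)) + s^2/a) := by
          rw [Real.mul_rpow (by positivity) (by positivity : (0:ℝ) ≤ a),
            Real.mul_rpow (by positivity) (by norm_num : (0:ℝ) ≤ 2)]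
          ring
      _ = Real.exp B := by
          have h1 : (1/(n:ℝ)) * 2 * a = 1 := by rw [hadef]; field_simp
          have h2 : -(s/(6*a)) + s^2/a = B := by
            rw [hBdef, hadef]; field_simp; ring
          rw [h1, Real.one_rpow, h2, one_mul]
  -- product bound
  have hprodmeas : Measurable fun ω => ∏ l, g l ω :=
    Finset.measurable_prod _ fun l _ => hgm l
  have hprod : ∫⁻ ω, ∏ l, g l ω ∂μ ≤ ENNReal.ofReal (Real.exp ((T:ℝ) * B)) := by
    rw [lintegral_indep_prod μ g hgm hgind Finset.univ]
    calc ∏ l, ∫⁻ ω, g l ω ∂μ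
        ≤ ∏ _l : Fin T, ENNReal.ofReal (Real.exp B) :=
          Finset.prod_le_prod' fun l _ => hmom l
      _ = ENNReal.ofReal (Real.exp B) ^ T := by
          rw [Finset.prod_const, Finset.card_univ, Fintype.card_fin]
      _ = ENNReal.ofReal (Real.exp B ^ T) := by
          rw [ENNReal.ofReal_pow (Real.exp_nonneg _)]
      _ = ENNReal.ofReal (Real.exp ((T:ℝ) * B)) := by
          rw [← Real.exp_nat_mul]
  -- Markov
  set A : Set Ω := {ω | ε < ∏ l, C l ω} with hAdef
  have hsub : A ⊆ {ω | ENNReal.ofReal (ε ^ s) ≤ ∏ l, g l ω} := by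
    intro ω hω
    simp only [hAdef, Set.mem_setOf_eq] at hω ⊢
    have h1 : ε ≤ ∏ l, |C l ω| := by
      calc ε ≤ ∏ l, C l ω := hω.le
        _ ≤ |∏ l, C l ω| := le_abs_self _
        _ = ∏ l, |C l ω| := Finset.abs_prod _ _
    have h2 : ε ^ s ≤ (∏ l, |C l ω|) ^ s := Real.rpow_le_rpow hε0.le h1 hs0.le
    rw [← Real.finset_prod_rpow _ _ (fun l _ => abs_nonneg _) s] at h2
    calc ENNReal.ofReal (ε^s) ≤ ENNReal.ofReal (∏ l, |C l ω|^s) :=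
          ENNReal.ofReal_le_ofReal h2
      _ = ∏ l, ENNReal.ofReal (|C l ω|^s) :=
          ENNReal.ofReal_prod_of_nonneg fun l _ => Real.rpow_nonneg (abs_nonneg _) s
      _ = ∏ l, g l ω := rfl
  have hεs0 : ENNReal.ofReal (ε^s) ≠ 0 :=
    (ENNReal.ofReal_pos.2 (Real.rpow_pos_of_pos hε0 s)).ne'
  have hmarkov : μ A ≤ ENNReal.ofReal (Real.exp ((T:ℝ)*B)) / ENNReal.ofReal (ε^s) := by
    calc μ A ≤ μ {ω | ENNReal.ofReal (ε ^ s) ≤ ∏ l, g l ω} := measure_mono hsub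
      _ ≤ (∫⁻ ω, ∏ l, g l ω ∂μ) / ENNReal.ofReal (ε^s) :=
          meas_ge_le_lintegral_div hprodmeas.aemeasurable hεs0 ENNReal.ofReal_ne_top
      _ ≤ ENNReal.ofReal (Real.exp ((T:ℝ)*B)) / ENNReal.ofReal (ε^s) :=
          ENNReal.div_le_div_right hprod _
  have hexpeq : ENNReal.ofReal (Real.exp ((T:ℝ)*B)) / ENNReal.ofReal (ε^s)
      = ENNReal.ofReal (Real.exp ((T:ℝ)*B - s * Real.log ε)) := by
    rw [← ENNReal.ofReal_div_of_pos (Real.rpow_pos_of_pos hε0 s)]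
    congr 1
    rw [Real.rpow_def_of_pos hε0, ← Real.exp_sub]
    congr 1
    ring
  have hlogε' : Real.log ε = T*δ - T/(3*n) := by
    rw [hδdef]
    field_simp
    ring
  have hexp2 : (T:ℝ)*B - s*Real.log ε = -(y/8) := by
    rw [hlogε', hBdef, hsdef, hydef]
    field_simp
    ring
  have hemain : Real.exp (-(y/8)) ≤ 6/y := by
    have h1 : 1 + y/16 ≤ Real.exp (y/16) := by
      have := Real.add_one_le_exp (y/16)
      linarith
    have hee : Real.exp (y/8) = Real.exp (y/16) * Real.exp (y/16) := by
      rw [← Real.exp_add]; ring_nf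
    have h2 : y/4 ≤ Real.exp (y/8) := by
      nlinarith [sq_nonneg (1 - y/16), hy0.le]
    have h3 : Real.exp (-(y/8)) = 1/Real.exp (y/8) := by
      rw [Real.exp_neg, one_div]
    rw [h3, div_le_div_iff₀ (Real.exp_pos _) hy0]
    nlinarith [h2]
  have hμA : μ A ≤ ENNReal.ofReal (6/y) := by
    calc μ A ≤ ENNReal.ofReal (Real.exp ((T:ℝ)*B)) / ENNReal.ofReal (ε^s) := hmarkov
      _ = ENNReal.ofReal (Real.exp (-(y/8))) := by rw [hexpeq, hexp2]
      _ ≤ ENNReal.ofReal (6/y) := ENNReal.ofReal_le_ofReal hemain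
  -- conclusion
  set M : Set Ω := {ω | ∏ l, C l ω ≤ ε} with hMdef
  have hMmeas : MeasurableSet M :=
    measurableSet_le (Finset.measurable_prod _ fun l _ => hmeas l) measurable_const
  have hcompl : Mᶜ = A := by
    rw [hMdef, hAdef]
    ext ω
    simp only [Set.mem_compl_iff, Set.mem_setOf_eq, not_le]
  have hsum : μ M + μ Mᶜ = 1 := by
    rw [measure_add_measure_compl hMmeas, measure_univ]
  have h1 : (μ M).toReal + (μ Mᶜ).toReal = 1 := by
    rw [← ENNReal.toReal_add (measure_ne_top μ M) (measure_ne_top μ Mᶜ), hsum]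
    simp
  have h2 : (μ Mᶜ).toReal ≤ 6/y := by
    rw [hcompl]
    calc (μ A).toReal ≤ (ENNReal.ofReal (6/y)).toReal :=
          ENNReal.toReal_mono ENNReal.ofReal_ne_top hμA
      _ = 6/y := ENNReal.toReal_ofReal (by positivity)
  linarith [h1, h2]
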